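/- Let μ ∈ ℂ with |μ| = 1, μ ≠ 1, and let k ∈ ℕ. Define f : ℝ → ℂ by f(x) = μ/(e^x − μ) = Σ_{m≥1} μ^m e^{−mx} (x > 0), and suppose the Dirichlet series ζ_μ(s) = Σ_{m≥1} μ^m m^{−s} admits a holomorphic continuation Z to ℂ satisfying Z(−k) = (−1)^k k! c_k whenever f(x) = Σ_{j<K} c_j x^j + O(x^K) near 0 for all K. Then ζ_μ(−k) = ((−1)^k μ/(1−μ)) · Σ_{ℓ=0}^{k} ℓ! · S(k,ℓ) / (μ−1)^ℓ, where S(k,ℓ) are Stirling numbers of the second kind. -/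

import Mathlib

open Complex Asymptotics Filter

/-- The Stirling number of the second kind: the number of partitions of a
`k`-element set into `ℓ` (nonempty) blocks. -/
noncomputable def stirling2 (k ℓ : ℕ) : ℕ :=
  Nat.card {P : Finpartition (Finset.univ : Finset (Fin k)) // P.parts.card = ℓ}

section AuxDev
open Finset Function

namespace StirlingAux

variable {k ℓ : ℕ}

/-- fiber of a function as a finset -/
def fib (f : Fin k → Fin ℓ) (j : Fin ℓ) : Finset (Fin k) :=
  Finset.univ.filter (fun i => f i = j)

lemma mem_fib {f : Fin k → Fin ℓ} {j : Fin ℓ} {i : Fin k} : i ∈ fib f j ↔ f i = j := by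
  simp [fib]

def fiberPartition (f : Fin k → Fin ℓ) (hf : Surjective f) :
    Finpartition (Finset.univ : Finset (Fin k)) where
  parts := Finset.univ.image (fun j : Fin ℓ => fib f j)
  supIndep := by
    rw [Finset.supIndep_iff_pairwiseDisjoint]
    rintro t ht u hu htu
    simp only [coe_image, Set.mem_image] at ht hu
    obtain ⟨j, -, rfl⟩ := ht
    obtain ⟨j', -, rfl⟩ := hu
    have hjj' : j ≠ j' := fun h => htu (by rw [h])
    show Disjoint (fib f j) (fib f j')
    rw [Finset.disjoint_left]
    intro i hi hi'
    exact hjj' (mem_fib.1 hi ▸ (mem_fib.1 hi').symm ▸ rfl)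
  sup_parts := by
    apply Finset.Subset.antisymm
    · exact Finset.subset_univ _
    · intro i _
      rw [Finset.mem_sup]
      exact ⟨fib f (f i), Finset.mem_image_of_mem _ (Finset.mem_univ _), mem_fib.2 rfl⟩
  bot_notMem := by
    simp only [Finset.bot_eq_empty, Finset.mem_image]
    rintro ⟨j, -, hj⟩
    obtain ⟨i, hi⟩ := hf j
    have : i ∈ fib f j := mem_fib.2 hi
    rw [hj] at this
    exact absurd this (Finset.notMem_empty i)

lemma fib_injective {f : Fin k → Fin ℓ} (hf : Surjective f) : Injective (fib f) := by
  intro j j' h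
  obtain ⟨i, hi⟩ := hf j
  have : i ∈ fib f j' := h ▸ mem_fib.2 hi
  exact hi ▸ mem_fib.1 this

lemma fiberPartition_parts_card {f : Fin k → Fin ℓ} (hf : Surjective f) :
    (fiberPartition f hf).parts.card = ℓ := by
  rw [fiberPartition]
  rw [Finset.card_image_of_injective _ (fib_injective hf), Finset.card_univ, Fintype.card_fin]

lemma fiberPartition_part {f : Fin k → Fin ℓ} (hf : Surjective f) (i : Fin k) :
    (fiberPartition f hf).part i = fib f (f i) :=
  Finpartition.part_eq_of_mem _ (Finset.mem_image_of_mem _ (Finset.mem_univ _)) (mem_fib.2 rfl)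

noncomputable def fibEquiv (f : Fin k → Fin ℓ) (hf : Surjective f) :
    Fin ℓ ≃ {t // t ∈ (fiberPartition f hf).parts} :=
  Equiv.ofBijective (fun j => ⟨fib f j, Finset.mem_image_of_mem _ (Finset.mem_univ _)⟩)
    ⟨fun j j' h => fib_injective hf (Subtype.ext_iff.1 h), by
      rintro ⟨t, ht⟩
      simp only [fiberPartition, Finset.mem_image] at ht
      obtain ⟨j, -, rfl⟩ := ht
      exact ⟨j, rfl⟩⟩

abbrev SigmaType (k ℓ : ℕ) :=
  Σ P : {P : Finpartition (Finset.univ : Finset (Fin k)) // P.parts.card = ℓ},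
    (Fin ℓ ≃ {t // t ∈ P.1.parts})

noncomputable def toSigma (f : {f : Fin k → Fin ℓ // Surjective f}) : SigmaType k ℓ :=
  ⟨⟨fiberPartition f.1 f.2, fiberPartition_parts_card f.2⟩, fibEquiv f.1 f.2⟩

/-- the function associated to a labeled partition -/
def pe2fun (P : Finpartition (Finset.univ : Finset (Fin k)))
    (e : Fin ℓ ≃ {t // t ∈ P.parts}) : Fin k → Fin ℓ :=
  fun i => e.symm ⟨P.part i, P.part_mem.2 (Finset.mem_univ i)⟩

lemma pe2fun_fib (P : Finpartition (Finset.univ : Finset (Fin k)))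
    (e : Fin ℓ ≃ {t // t ∈ P.parts}) (j : Fin ℓ) : fib (pe2fun P e) j = (e j).1 := by
  ext i
  rw [mem_fib]
  constructor
  · intro h
    have h2 : (⟨P.part i, P.part_mem.2 (Finset.mem_univ i)⟩ : {t // t ∈ P.parts}) = e j := by
      rw [← h, pe2fun]; simp
    have hpi : P.part i = (e j).1 := by rw [← h2]
    exact hpi ▸ P.mem_part (Finset.mem_univ i)
  · intro h
    have h2 : P.part i = (e j).1 := Finpartition.part_eq_of_mem _ (e j).2 h
    rw [pe2fun]
    simp only [h2]
    simp

lemma pe2fun_surj (P : Finpartition (Finset.univ : Finset (Fin k)))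
    (e : Fin ℓ ≃ {t // t ∈ P.parts}) : Surjective (pe2fun P e) := by
  intro j
  obtain ⟨i, hi⟩ := P.nonempty_of_mem_parts (e j).2
  refine ⟨i, ?_⟩
  have h2 : P.part i = (e j).1 := Finpartition.part_eq_of_mem _ (e j).2 hi
  rw [pe2fun]; simp only [h2]; simp

def fromSigma (Pe : SigmaType k ℓ) : {f : Fin k → Fin ℓ // Surjective f} :=
  ⟨pe2fun Pe.1.1 Pe.2, pe2fun_surj Pe.1.1 Pe.2⟩

lemma pe2fun_partition (P : Finpartition (Finset.univ : Finset (Fin k)))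
    (e : Fin ℓ ≃ {t // t ∈ P.parts}) :
    fiberPartition (pe2fun P e) (pe2fun_surj P e) = P := by
  apply Finpartition.ext
  ext t
  simp only [fiberPartition, Finset.mem_image]
  constructor
  · rintro ⟨j, -, rfl⟩
    rw [pe2fun_fib P e j]
    exact (e j).2
  · intro ht
    obtain ⟨j, hj⟩ := e.surjective ⟨t, ht⟩
    exact ⟨j, Finset.mem_univ _, by rw [pe2fun_fib P e j, hj]⟩

lemma left_inv : Function.LeftInverse (fromSigma (k := k) (ℓ := ℓ)) toSigma := by
  rintro ⟨f, hf⟩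
  apply Subtype.ext
  funext i
  show (fibEquiv f hf).symm _ = f i
  refine (Equiv.symm_apply_eq _).2 ?_
  apply Subtype.ext
  simp only [fibEquiv, Equiv.ofBijective_apply]
  exact fiberPartition_part hf i

lemma toSigma_inj : Injective (toSigma (k := k) (ℓ := ℓ)) :=
  left_inv.injective

lemma fromSigma_inj : Injective (fromSigma (k := k) (ℓ := ℓ)) := by
  rintro ⟨⟨P, hP⟩, e⟩ ⟨⟨P', hP'⟩, e'⟩ h
  have hf : pe2fun P e = pe2fun P' e' := congrArg Subtype.val h
  have hPP' : P = P' := by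
    rw [← pe2fun_partition P e, ← pe2fun_partition P' e']
    apply Finpartition.ext
    show (Finset.univ.image (fib (pe2fun P e))) = (Finset.univ.image (fib (pe2fun P' e')))
    rw [hf]
  subst hPP'
  have hee' : e = e' := by
    apply Equiv.ext
    intro j
    apply Subtype.ext
    rw [← pe2fun_fib P e j, ← pe2fun_fib P e' j, hf]
  subst hee'
  rfl

instance finpartition_finite : Finite (Finpartition (Finset.univ : Finset (Fin k))) :=
  Finite.of_injective (fun P => P.parts) (fun P Q h => Finpartition.ext h)

lemma card_sigma_eq (k ℓ : ℕ) : Nat.card (SigmaType k ℓ) = stirling2 k ℓ * ℓ.factorial := by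
  letI : Fintype {P : Finpartition (Finset.univ : Finset (Fin k)) // P.parts.card = ℓ} :=
    Fintype.ofFinite _
  rw [Nat.card_eq_fintype_card, Fintype.card_sigma]
  have hc : ∀ P : {P : Finpartition (Finset.univ : Finset (Fin k)) // P.parts.card = ℓ},
      Fintype.card (Fin ℓ ≃ {t // t ∈ P.1.parts}) = ℓ.factorial := by
    intro P
    have hcard : Fintype.card {t // t ∈ P.1.parts} = ℓ := by
      rw [Fintype.card_coe]; exact P.2
    rw [Fintype.card_equiv (Fintype.equivOfCardEq (by rw [hcard, Fintype.card_fin]))]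
    rw [Fintype.card_fin]
  simp only [hc, Finset.sum_const, Finset.card_univ, smul_eq_mul]
  rw [stirling2, Nat.card_eq_fintype_card]

lemma surjCard_eq (k ℓ : ℕ) :
    Nat.card {f : Fin k → Fin ℓ // Surjective f} = stirling2 k ℓ * ℓ.factorial := by
  rw [← card_sigma_eq]
  exact le_antisymm (Nat.card_le_card_of_injective _ toSigma_inj)
    (Nat.card_le_card_of_injective _ fromSigma_inj)

section Recurrence

variable {m : ℕ}

noncomputable def eNe (j : Fin (m + 1)) : {i : Fin (m + 1) // i ≠ j} ≃ Fin m :=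
  Fintype.equivFinOfCardEq (by
    rw [Fintype.card_subtype_compl, Fintype.card_subtype_eq, Fintype.card_fin]
    rfl)

lemma aux_ne {f : Fin (k + 1) → Fin (m + 1)} (hf : Surjective f)
    (hns : ¬ Surjective (f ∘ Fin.castSucc)) (i : Fin k) :
    f (Fin.castSucc i) ≠ f (Fin.last k) := by
  obtain ⟨j₀, hj₀⟩ := not_forall.1 hns
  rw [not_exists] at hj₀
  have hlast : f (Fin.last k) = j₀ := by
    obtain ⟨i₀, hi₀⟩ := hf j₀
    rcases Fin.eq_castSucc_or_eq_last i₀ with ⟨i', rfl⟩ | rfl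
    · exact absurd hi₀ (hj₀ i')
    · exact hi₀
  rw [hlast]
  exact hj₀ i

lemma aux_surj {f : Fin (k + 1) → Fin (m + 1)} (hf : Surjective f)
    (hns : ¬ Surjective (f ∘ Fin.castSucc)) :
    Surjective (fun i => eNe (f (Fin.last k)) ⟨f (Fin.castSucc i), aux_ne hf hns i⟩) := by
  intro j'
  obtain ⟨i₀, hi₀⟩ := hf ((eNe (f (Fin.last k))).symm j').1
  rcases Fin.eq_castSucc_or_eq_last i₀ with ⟨i', rfl⟩ | rfl
  · refine ⟨i', ?_⟩
    have h2 : (⟨f (Fin.castSucc i'), aux_ne hf hns i'⟩ :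
        {i : Fin (m+1) // i ≠ f (Fin.last k)}) = (eNe (f (Fin.last k))).symm j' :=
      Subtype.ext hi₀
    dsimp only
    rw [h2, Equiv.apply_symm_apply]
  · exact absurd hi₀.symm ((eNe (f (Fin.last k))).symm j').2

lemma snoc_surj_inl (g : Fin k → Fin (m + 1)) (hg : Surjective g) (j : Fin (m + 1)) :
    Surjective (Fin.snoc g j : Fin (k + 1) → Fin (m + 1)) := fun j' => by
  obtain ⟨i, hi⟩ := hg j'
  exact ⟨Fin.castSucc i, by rwa [Fin.snoc_castSucc]⟩

lemma snoc_surj_inr (j : Fin (m + 1)) (g : Fin k → {i : Fin (m + 1) // i ≠ j})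
    (hg : Surjective g) :
    Surjective (Fin.snoc (fun i => (g i).1) j : Fin (k + 1) → Fin (m + 1)) := fun j' => by
  by_cases h : j' = j
  · exact ⟨Fin.last k, by rw [Fin.snoc_last, h]⟩
  · obtain ⟨i, hi⟩ := hg ⟨j', h⟩
    exact ⟨Fin.castSucc i, by rw [Fin.snoc_castSucc, hi]⟩

abbrev ProdType (k m : ℕ) :=
  Fin (m + 1) × ({g : Fin k → Fin (m + 1) // Surjective g} ⊕ {g : Fin k → Fin m // Surjective g})

noncomputable def toProd (f : {f : Fin (k + 1) → Fin (m + 1) // Surjective f}) : ProdType k m :=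
  (f.1 (Fin.last k),
    if h : Surjective (f.1 ∘ Fin.castSucc) then .inl ⟨f.1 ∘ Fin.castSucc, h⟩
    else .inr ⟨fun i => eNe (f.1 (Fin.last k)) ⟨f.1 (Fin.castSucc i), aux_ne f.2 h i⟩,
      aux_surj f.2 h⟩)

noncomputable def fromProd (p : ProdType k m) : {f : Fin (k + 1) → Fin (m + 1) // Surjective f} :=
  match p with
  | (j, .inl g) => ⟨Fin.snoc g.1 j, snoc_surj_inl g.1 g.2 j⟩
  | (j, .inr g) => ⟨Fin.snoc (fun i => ((eNe j).symm (g.1 i)).1) j,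
      snoc_surj_inr j _ ((eNe j).symm.surjective.comp g.2)⟩

lemma toProd_leftInv :
    Function.LeftInverse (fromProd (k := k) (m := m)) toProd := by
  rintro ⟨f, hf⟩
  rw [toProd]
  by_cases h : Surjective (f ∘ Fin.castSucc)
  · rw [dif_pos h, fromProd]
    apply Subtype.ext
    funext i
    refine Fin.lastCases ?_ (fun i' => ?_) i <;> simp
  · rw [dif_neg h, fromProd]
    apply Subtype.ext
    funext i
    refine Fin.lastCases ?_ (fun i' => ?_) i <;> simp

lemma toProd_inj : Injective (toProd (k := k) (m := m)) :=
  toProd_leftInv.injective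

lemma fromProd_inj : Injective (fromProd (k := k) (m := m)) := by
  rintro ⟨j, g⟩ ⟨j', g'⟩ h
  have hval := congrArg Subtype.val h
  have hj : j = j' := by
    rcases g with g | g <;> rcases g' with g' | g' <;>
      simpa [fromProd, Fin.snoc_last] using congrFun hval (Fin.last k)
  subst hj
  rcases g with g | g <;> rcases g' with g' | g'
  · have : g.1 = g'.1 := by
      funext i
      simpa [fromProd, Fin.snoc_castSucc] using congrFun hval (Fin.castSucc i)
    rw [show g = g' from Subtype.ext this]
  · exfalso
    obtain ⟨i, hi⟩ := g.2 j
    have := congrFun hval (Fin.castSucc i)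
    simp only [fromProd, Fin.snoc_castSucc] at this
    rw [hi] at this
    exact (((eNe j).symm (g'.1 i)).2) this.symm
  · exfalso
    obtain ⟨i, hi⟩ := g'.2 j
    have := congrFun hval (Fin.castSucc i)
    simp only [fromProd, Fin.snoc_castSucc] at this
    rw [hi] at this
    exact (((eNe j).symm (g.1 i)).2) this
  · have : g.1 = g'.1 := by
      funext i
      have := congrFun hval (Fin.castSucc i)
      simp only [fromProd, Fin.snoc_castSucc] at this
      exact (eNe j).symm.injective (Subtype.ext this)
    rw [show g = g' from Subtype.ext this]

lemma surjCard_succ_succ (k m : ℕ) :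
    Nat.card {f : Fin (k + 1) → Fin (m + 1) // Surjective f} =
      (m + 1) * (Nat.card {g : Fin k → Fin (m + 1) // Surjective g} +
        Nat.card {g : Fin k → Fin m // Surjective g}) := by
  have : Nat.card {f : Fin (k + 1) → Fin (m + 1) // Surjective f} = Nat.card (ProdType k m) :=
    le_antisymm (Nat.card_le_card_of_injective _ toProd_inj)
      (Nat.card_le_card_of_injective _ fromProd_inj)
  rw [this, Nat.card_prod, Nat.card_sum, Nat.card_eq_fintype_card, Fintype.card_fin]

end Recurrence

lemma surjCard_zero_zero : Nat.card {f : Fin 0 → Fin 0 // Surjective f} = 1 := by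
  have : Unique {f : Fin 0 → Fin 0 // Surjective f} :=
    { default := ⟨fun i => i.elim0, fun j => j.elim0⟩
      uniq := fun a => Subtype.ext (funext fun i => i.elim0) }
  exact Nat.card_unique

lemma surjCard_succ_zero (k : ℕ) : Nat.card {f : Fin (k+1) → Fin 0 // Surjective f} = 0 := by
  have : IsEmpty {f : Fin (k+1) → Fin 0 // Surjective f} := ⟨fun f => (f.1 0).elim0⟩
  exact Nat.card_of_isEmpty

lemma surjCard_lt {k ℓ : ℕ} (h : k < ℓ) : Nat.card {f : Fin k → Fin ℓ // Surjective f} = 0 := by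
  have : IsEmpty {f : Fin k → Fin ℓ // Surjective f} := ⟨fun f => by
    have := Fintype.card_le_of_surjective f.1 f.2
    simp only [Fintype.card_fin] at this
    omega⟩
  exact Nat.card_of_isEmpty

end StirlingAux

open StirlingAux in
lemma stirling2_zero_zero : stirling2 0 0 = 1 := by
  have h := surjCard_eq 0 0
  rw [surjCard_zero_zero, Nat.factorial_zero, mul_one] at h
  omega

open StirlingAux in
lemma stirling2_succ_zero (k : ℕ) : stirling2 (k+1) 0 = 0 := by
  have h := surjCard_eq (k+1) 0
  rw [surjCard_succ_zero, Nat.factorial_zero, mul_one] at h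
  omega

open StirlingAux in
lemma stirling2_of_lt {k ℓ : ℕ} (h : k < ℓ) : stirling2 k ℓ = 0 := by
  have h2 := surjCard_eq k ℓ
  rw [surjCard_lt h] at h2
  rcases Nat.mul_eq_zero.1 h2.symm with h3 | h3
  · exact h3
  · exact absurd h3 (Nat.factorial_pos ℓ).ne'

open StirlingAux in
lemma stirling2_succ_succ (k m : ℕ) :
    stirling2 (k+1) (m+1) = (m+1) * stirling2 k (m+1) + stirling2 k m := by
  have h := surjCard_succ_succ k m
  rw [surjCard_eq (k+1) (m+1), surjCard_eq k (m+1), surjCard_eq k m] at h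
  have hm : (m+1).factorial = (m+1) * m.factorial := rfl
  apply Nat.eq_of_mul_eq_mul_right (Nat.factorial_pos (m+1))
  rw [h, hm]
  ring

namespace ZetaMuAux

open Complex Asymptotics Filter Finset

/-- the coefficient -/
noncomputable def C (μ : ℂ) (k ℓ : ℕ) : ℂ :=
  (stirling2 k ℓ : ℂ) * (-1)^ℓ * (Nat.factorial ℓ : ℂ) * μ

lemma hasDerivAt_T (μ : ℂ) (ℓ : ℕ) (z : ℂ) (hz : Complex.exp z - μ ≠ 0) :
    HasDerivAt (fun w => Complex.exp w ^ ℓ * ((Complex.exp w - μ)⁻¹)^(ℓ+1))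
      ((ℓ : ℂ) * (Complex.exp z ^ ℓ * ((Complex.exp z - μ)⁻¹)^(ℓ+1))
        - ((ℓ:ℂ)+1) * (Complex.exp z ^ (ℓ+1) * ((Complex.exp z - μ)⁻¹)^(ℓ+2))) z := by
  have he : HasDerivAt (fun w => Complex.exp w - μ) (Complex.exp z) z :=
    (Complex.hasDerivAt_exp z).sub_const μ
  have hinv : HasDerivAt (fun w => (Complex.exp w - μ)⁻¹)
      (-Complex.exp z / (Complex.exp z - μ)^2) z := he.inv hz
  have hpow1 : HasDerivAt (fun w => Complex.exp w ^ ℓ)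
      ((ℓ:ℂ) * Complex.exp z ^ (ℓ-1) * Complex.exp z) z := (Complex.hasDerivAt_exp z).pow ℓ
  have hpow2 : HasDerivAt (fun w => ((Complex.exp w - μ)⁻¹)^(ℓ+1))
      (((ℓ:ℂ)+1) * ((Complex.exp z - μ)⁻¹)^ℓ * (-Complex.exp z / (Complex.exp z - μ)^2)) z := by
    have h2 := hinv.fun_pow (ℓ+1)
    simpa using h2
  have := hpow1.fun_mul hpow2
  refine this.congr_deriv ?_
  rcases ℓ with _ | n
  · simp [div_eq_mul_inv]
  · simp only [Nat.succ_sub_one]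
    push_cast
    rw [div_eq_mul_inv, ← inv_pow]
    ring

lemma iteratedDeriv_g (μ : ℂ) (k : ℕ) :
    ∀ z : ℂ, Complex.exp z ≠ μ →
      iteratedDeriv k (fun w => μ / (Complex.exp w - μ)) z =
        ∑ ℓ ∈ Finset.range (k+1), C μ k ℓ *
          (Complex.exp z ^ ℓ * ((Complex.exp z - μ)⁻¹)^(ℓ+1)) := by
  induction k with
  | zero =>
    intro z hz
    rw [iteratedDeriv_zero]
    simp [C, stirling2_zero_zero, div_eq_mul_inv]
  | succ k ih =>
    intro z hz
    have hz' : Complex.exp z - μ ≠ 0 := sub_ne_zero.2 hz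
    rw [iteratedDeriv_succ]
    have hU : IsOpen {w : ℂ | Complex.exp w ≠ μ} :=
      isOpen_compl_singleton.preimage Complex.continuous_exp
    have hev : iteratedDeriv k (fun w => μ / (Complex.exp w - μ)) =ᶠ[nhds z]
        (fun w => ∑ ℓ ∈ Finset.range (k+1), C μ k ℓ *
          (Complex.exp w ^ ℓ * ((Complex.exp w - μ)⁻¹)^(ℓ+1))) :=
      eventually_of_mem (hU.mem_nhds hz) (fun w hw => ih w hw)
    rw [hev.deriv_eq]
    have hG : HasDerivAt (fun w => ∑ ℓ ∈ Finset.range (k+1), C μ k ℓ *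
          (Complex.exp w ^ ℓ * ((Complex.exp w - μ)⁻¹)^(ℓ+1)))
        (∑ ℓ ∈ Finset.range (k+1), C μ k ℓ *
          ((ℓ : ℂ) * (Complex.exp z ^ ℓ * ((Complex.exp z - μ)⁻¹)^(ℓ+1))
            - ((ℓ:ℂ)+1) * (Complex.exp z ^ (ℓ+1) * ((Complex.exp z - μ)⁻¹)^(ℓ+2)))) z :=
      HasDerivAt.fun_sum (fun ℓ _ => (hasDerivAt_T μ ℓ z hz').const_mul (C μ k ℓ))
    rw [hG.deriv]
    -- now the sum identity
    set t : ℕ → ℂ := fun ℓ => Complex.exp z ^ ℓ * ((Complex.exp z - μ)⁻¹)^(ℓ+1) with ht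
    have htsucc : ∀ ℓ : ℕ, Complex.exp z ^ (ℓ+1) * ((Complex.exp z - μ)⁻¹)^(ℓ+2) = t (ℓ+1) :=
      fun ℓ => rfl
    simp only [htsucc]
    rw [Finset.sum_range_succ' (fun ℓ => C μ (k+1) ℓ * t ℓ) (k+1)]
    have h0 : C μ (k+1) 0 * t 0 = 0 := by
      simp [C, stirling2_succ_zero]
    rw [h0, add_zero]
    have hsplit : ∑ ℓ ∈ Finset.range (k+1), C μ k ℓ *
        ((ℓ : ℂ) * t ℓ - ((ℓ:ℂ)+1) * t (ℓ+1)) =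
        (∑ ℓ ∈ Finset.range (k+1), C μ k ℓ * (ℓ : ℂ) * t ℓ)
          - ∑ ℓ ∈ Finset.range (k+1), C μ k ℓ * ((ℓ:ℂ)+1) * t (ℓ+1) := by
      rw [← Finset.sum_sub_distrib]
      congr 1; funext ℓ; ring
    rw [hsplit]
    have hfirst : ∑ ℓ ∈ Finset.range (k+1), C μ k ℓ * (ℓ : ℂ) * t ℓ =
        ∑ ℓ ∈ Finset.range (k+1), C μ k (ℓ+1) * ((ℓ:ℂ)+1) * t (ℓ+1) := by
      rw [Finset.sum_range_succ' (fun ℓ => C μ k ℓ * (ℓ : ℂ) * t ℓ) k]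
      rw [Finset.sum_range_succ (fun ℓ => C μ k (ℓ+1) * ((ℓ:ℂ)+1) * t (ℓ+1)) k]
      simp only [Nat.cast_zero, mul_zero, zero_mul, add_zero]
      have hk1 : C μ k (k+1) = 0 := by
        simp [C, stirling2_of_lt (Nat.lt_succ_self k)]
      rw [hk1]
      simp only [zero_mul, add_zero]
      congr 1; funext ℓ; push_cast; ring
    rw [hfirst, ← Finset.sum_sub_distrib]
    congr 1
    funext ℓ
    have hrec : (stirling2 (k+1) (ℓ+1) : ℂ) =
        ((ℓ:ℂ)+1) * (stirling2 k (ℓ+1) : ℂ) + (stirling2 k ℓ : ℂ) := by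
      rw [stirling2_succ_succ]
      push_cast
      ring
    simp only [C]
    rw [hrec]
    have hfact : ((ℓ+1).factorial : ℂ) = ((ℓ:ℂ)+1) * (ℓ.factorial : ℂ) := by
      rw [Nat.factorial_succ]; push_cast; ring
    rw [hfact]
    push_cast
    ring

end ZetaMuAux

namespace ZetaMuAux

lemma analyticAt_g (μ : ℂ) (hμ1 : μ ≠ 1) :
    AnalyticAt ℂ (fun w => μ / (Complex.exp w - μ)) 0 := by
  apply analyticAt_const.div
  · exact (Complex.differentiable_exp.analyticAt 0).sub analyticAt_const
  · rw [Complex.exp_zero]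
    exact sub_ne_zero.2 (Ne.symm hμ1)

end ZetaMuAux


end AuxDev

theorem zeta_mu_at_neg_int (μ : ℂ) (hμ : ‖μ‖ = 1) (hμ1 : μ ≠ 1) (k : ℕ)
    (f : ℝ → ℂ) (hf : ∀ x : ℝ, f x = μ / (Complex.exp (x : ℂ) - μ))
    (Z : ℂ → ℂ)
    (hZ : ∀ s : ℂ, 1 < s.re →
      HasSum (fun m : ℕ => μ ^ (m + 1) * ((m : ℂ) + 1) ^ (-s)) (Z s))
    (hZk : ∀ c : ℕ → ℂ,
      (∀ K : ℕ, (fun x : ℝ => f x - ∑ j ∈ Finset.range K, c j * (x : ℂ) ^ j)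
          =O[nhds 0] fun x : ℝ => x ^ K) →
      Z (-(k : ℂ)) = (-1) ^ k * (Nat.factorial k : ℂ) * c k) :
    Z (-(k : ℂ)) = ((-1) ^ k * μ / (1 - μ)) *
      ∑ ℓ ∈ Finset.range (k + 1),
        (Nat.factorial ℓ : ℂ) * (stirling2 k ℓ : ℂ) / (μ - 1) ^ ℓ := by
  classical
  set g : ℂ → ℂ := fun w => μ / (Complex.exp w - μ) with hg
  have h1μ : (1 : ℂ) - μ ≠ 0 := sub_ne_zero.2 (Ne.symm hμ1)
  have hμ1' : (μ : ℂ) - 1 ≠ 0 := sub_ne_zero.2 hμ1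
  obtain ⟨p, hp⟩ := ZetaMuAux.analyticAt_g μ hμ1
  obtain ⟨r, hpr⟩ := hp
  set c : ℕ → ℂ := fun j => ((j.factorial : ℂ))⁻¹ * iteratedDeriv j g 0 with hc
  have hcoeff : ∀ j, p.coeff j = c j := by
    intro j
    have h := hpr.factorial_smul (y := (1 : ℂ)) j
    rw [iteratedFDeriv_apply_eq_iteratedDeriv_mul_prod] at h
    simp only [Finset.prod_const, one_pow, one_smul, nsmul_eq_mul] at h
    have : (p j fun _ => (1:ℂ)) = p.coeff j := by
      rw [p.apply_eq_pow_smul_coeff, one_pow, one_smul]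
    rw [this] at h
    rw [← hg] at h
    show p.coeff j = ((j.factorial : ℂ))⁻¹ * iteratedDeriv j g 0
    rw [← h, ← mul_assoc, inv_mul_cancel₀ (by exact_mod_cast j.factorial_ne_zero), one_mul]
  have hbig : ∀ K, (fun x : ℝ => f x - ∑ j ∈ Finset.range K, c j * (x:ℂ)^j)
      =O[nhds 0] fun x : ℝ => x^K := by
    intro K
    have h1 : (fun y : ℂ => g (0 + y) - p.partialSum K y) =O[nhds 0] fun y => ‖y‖ ^ K :=
      HasFPowerSeriesAt.isBigO_sub_partialSum_pow ⟨r, hpr⟩ K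
    have h2 : Filter.Tendsto (fun x : ℝ => (x : ℂ)) (nhds 0) (nhds 0) := by
      simpa using Complex.continuous_ofReal.tendsto 0
    have h3 := h1.comp_tendsto h2
    have h4 : (fun x : ℝ => f x - ∑ j ∈ Finset.range K, c j * (x:ℂ)^j) =
        fun x : ℝ => g (0 + (x:ℂ)) - p.partialSum K (x:ℂ) := by
      funext x
      rw [hf x, FormalMultilinearSeries.partialSum, zero_add]
      congr 1
      apply Finset.sum_congr rfl
      intro j _
      rw [p.apply_eq_pow_smul_coeff, hcoeff j, smul_eq_mul]
      ring
    rw [h4]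
    refine h3.trans (Asymptotics.isBigO_of_le _ (fun x => ?_))
    simp only [Function.comp]
    simp [Real.norm_eq_abs, Complex.norm_real, norm_pow, abs_pow, abs_abs]
  rw [hZk c hbig]
  have hexp0 : Complex.exp (0:ℂ) ≠ μ := by
    rw [Complex.exp_zero]; exact Ne.symm hμ1
  have hiter := ZetaMuAux.iteratedDeriv_g μ k 0 hexp0
  rw [← hg] at hiter
  show (-1:ℂ)^k * (k.factorial : ℂ) * (((k.factorial : ℂ))⁻¹ * iteratedDeriv k g 0) = _
  rw [hiter]
  rw [Complex.exp_zero]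
  rw [← mul_assoc, mul_assoc ((-1:ℂ)^k), mul_inv_cancel₀ (by exact_mod_cast k.factorial_ne_zero),
    mul_one]
  rw [Finset.mul_sum, Finset.mul_sum]
  apply Finset.sum_congr rfl
  intro ℓ _
  have hpow : ((μ : ℂ) - 1)^ℓ = (-1)^ℓ * (1 - μ)^ℓ := by
    rw [show (μ : ℂ) - 1 = -(1 - μ) by ring, neg_pow]
  rw [ZetaMuAux.C, hpow]
  rw [one_pow]
  have h3 : ((-1:ℂ)^ℓ)⁻¹ = (-1)^ℓ := by rw [← inv_pow, inv_neg_one]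
  simp only [div_eq_mul_inv, mul_inv, h3]
  ring
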